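/- Let m > 2 be an integer, let A ∈ ℝ[y¹,…,yⁿ] be a nonconstant irreducible polynomial, and let W be a nonempty open subset of {y ∈ ℝⁿ : A(y) > 0}. If Φ, Ψ, Θ ∈ ℝ[y¹,…,yⁿ] satisfy Φ(y)·A(y)^{(2/m)−2} + Ψ(y)·A(y)^{(1/m)−1} + Θ(y) = 0 for all y ∈ W, then Φ = Ψ = Θ = 0 (as polynomials). -/

import Mathlib

open scoped BigOperators
open Matrix

noncomputable section

/-- Partial derivative of `f` in the `i`-th coordinate direction at `v`. -/
def pd {n : ℕ} (f : (Fin n → ℝ) → ℝ) (i : Fin n) (v : Fin n → ℝ) : ℝ :=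
  fderiv ℝ f v (Pi.single i 1)

section Aux

open Polynomial

variable {n m : ℕ}

local notation "R" => MvPolynomial (Fin n) ℝ
local notation "𝕂" => FractionRing (MvPolynomial (Fin n) ℝ)

lemma aux_mvpoly_eval_analytic (p : MvPolynomial (Fin n) ℝ) :
    AnalyticOnNhd ℝ (fun y : Fin n → ℝ => MvPolynomial.eval y p) Set.univ := by
  intro x _
  have h : ∀ i : Fin n, AnalyticAt ℝ (fun y : Fin n → ℝ => y i) x := fun i =>
    (ContinuousLinearMap.proj i : (Fin n → ℝ) →L[ℝ] ℝ).analyticAt x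
  have := AnalyticAt.aeval_mvPolynomial (f := fun y : Fin n → ℝ => y) h p
  have he : ∀ y : Fin n → ℝ, MvPolynomial.aeval y p = MvPolynomial.eval y p := by
    intro y
    rw [← MvPolynomial.coe_aeval_eq_eval]
    rfl
  simpa [he] using this

lemma aux_mvpoly_zero_of_eqOn {p : MvPolynomial (Fin n) ℝ} {W : Set (Fin n → ℝ)}
    (hW : IsOpen W) (hne : W.Nonempty) (hz : ∀ y ∈ W, MvPolynomial.eval y p = 0) : p = 0 := by
  obtain ⟨x, hx⟩ := hne
  have h0 : (fun y => MvPolynomial.eval y p) =ᶠ[nhds x] 0 :=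
    Filter.eventuallyEq_of_mem (hW.mem_nhds hx) (fun y hy => hz y hy)
  have hall := (aux_mvpoly_eval_analytic p).eqOn_zero_of_preconnected_of_eventuallyEq_zero
    isPreconnected_univ (Set.mem_univ x) h0
  apply MvPolynomial.funext
  intro y
  simpa using hall (Set.mem_univ y)

lemma aux_xm_sub_A_irred (hm : 0 < m) (A : R) (hAirr : Irreducible A) :
    Irreducible ((X ^ m - C A : R[X]).map (algebraMap R 𝕂)) := by
  have hAp : Prime A := hAirr.prime
  set f : R[X] := X ^ m - C A with hf
  have hmonic : f.Monic := monic_X_pow_sub_C A hm.ne'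
  have hdeg : f.natDegree = m := natDegree_X_pow_sub_C
  have hPprime : (Ideal.span {A}).IsPrime := (Ideal.span_singleton_prime hAp.ne_zero).mpr hAp
  have heis : f.IsEisensteinAt (Ideal.span {A}) := by
    constructor
    · rw [hmonic.leadingCoeff, Ideal.mem_span_singleton]
      intro hdvd
      exact hAirr.not_isUnit (isUnit_of_dvd_one hdvd)
    · intro k hk
      rw [hdeg] at hk
      rw [Ideal.mem_span_singleton]
      simp only [hf, coeff_sub, coeff_X_pow, coeff_C, if_neg hk.ne]
      rcases eq_or_ne k 0 with rfl | hk0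
      · simpa using Dvd.intro (-1) (by ring)
      · simp [hk0]
    · rw [Ideal.span_singleton_pow, Ideal.mem_span_singleton]
      simp only [hf, coeff_sub, coeff_X_pow, coeff_C, if_true, if_neg hm.ne, if_pos rfl,
        zero_sub, dvd_neg, eq_self_iff_true]
      rintro ⟨c, hc⟩
      have h1 : A * (1 - A * c) = 0 := by linear_combination hc
      rcases mul_eq_zero.mp h1 with h2 | h2
      · exact hAp.ne_zero h2
      · exact hAirr.not_isUnit (IsUnit.of_mul_eq_one (a := A) c (by linear_combination -h2))
  have hirr : Irreducible f :=
    heis.irreducible hPprime hmonic.isPrimitive (by rw [hdeg]; exact hm)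
  exact (hmonic.irreducible_iff_irreducible_map_fraction_map (K := 𝕂)).mp hirr

lemma aux_main (hm : 2 < m) (A : R) (hAnz : A ≠ 0)
    (Φ Ψ Θ : R)
    (hfirr : Irreducible ((X ^ m - C A : R[X]).map (algebraMap R 𝕂)))
    (W : Set (Fin n → ℝ)) (hWne : W.Nonempty)
    (hzero : ∀ q : R, (∀ y ∈ W, MvPolynomial.eval y q = 0) → q = 0)
    (heval : ∀ y ∈ W,
      Polynomial.eval₂ (MvPolynomial.eval y) ((MvPolynomial.eval y A) ^ ((1:ℝ)/(m:ℝ)))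
        (C Φ * X ^ 2 + C (Ψ * A) * X + C (Θ * A ^ 2) : R[X]) = 0)
    (hfeval : ∀ y ∈ W,
      Polynomial.eval₂ (MvPolynomial.eval y) ((MvPolynomial.eval y A) ^ ((1:ℝ)/(m:ℝ)))
        (X ^ m - C A : R[X]) = 0) :
    Φ = 0 ∧ Ψ = 0 ∧ Θ = 0 := by
  set f : R[X] := X ^ m - C A with hfdef
  set g : R[X] := C Φ * X ^ 2 + C (Ψ * A) * X + C (Θ * A ^ 2) with hgdef
  have hg0 : g = 0 := by
    by_contra hg
    set φ : R →+* 𝕂 := algebraMap R 𝕂 with hφ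
    have hφinj : Function.Injective φ := IsFractionRing.injective R 𝕂
    have hmonic : f.Monic := monic_X_pow_sub_C A (by omega)
    have hfK_deg : (f.map φ).natDegree = m := by
      rw [hmonic.natDegree_map]; exact natDegree_X_pow_sub_C
    have hgK_ne : g.map φ ≠ 0 := by
      intro hc
      exact hg (Polynomial.map_injective φ hφinj (by simpa using hc))
    have hg_deg : g.natDegree ≤ 2 := by
      apply Polynomial.natDegree_add_le_of_degree_le
      · apply Polynomial.natDegree_add_le_of_degree_le
        · exact (natDegree_C_mul_le _ _).trans (by simp)
        · exact (natDegree_C_mul_le _ _).trans (by simp)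
      · exact (natDegree_C _).le.trans (by norm_num)
    have hnotdvd : ¬ (f.map φ ∣ g.map φ) := by
      intro hdvd
      have := Polynomial.natDegree_le_of_dvd hdvd hgK_ne
      have h2 : (g.map φ).natDegree ≤ 2 := (natDegree_map_le).trans hg_deg
      omega
    have hcop : IsCoprime (f.map φ) (g.map φ) := hfirr.coprime_iff_not_dvd.mpr hnotdvd
    obtain ⟨a, b, hab⟩ := hcop
    obtain ⟨ca, ha⟩ := IsLocalization.integerNormalization_map_to_map (nonZeroDivisors R) a
    obtain ⟨cb, hb⟩ := IsLocalization.integerNormalization_map_to_map (nonZeroDivisors R) b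
    set a' := IsLocalization.integerNormalization (nonZeroDivisors R) a with ha'
    set b' := IsLocalization.integerNormalization (nonZeroDivisors R) b with hb'
    have main : ((C (cb : R) * C (ca : R) : R[X])).map φ
        = ((C (cb : R) * a') * f + (C (ca : R) * b') * g).map φ := by
      rw [← hφ] at ha hb
      simp only [Polynomial.map_add, Polynomial.map_mul, Polynomial.map_C, ha, hb]
      rw [← algebraMap_smul 𝕂 (ca : R) a, ← algebraMap_smul 𝕂 (cb : R) b,
        Polynomial.smul_eq_C_mul, Polynomial.smul_eq_C_mul]
      linear_combination (-(Polynomial.C (φ (ca : R)) * Polynomial.C (φ (cb : R)))) * hab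
    have main' : (C (cb : R) * C (ca : R) : R[X])
        = (C (cb : R) * a') * f + (C (ca : R) * b') * g :=
      Polynomial.map_injective φ hφinj main
    have hvan : ∀ y ∈ W, MvPolynomial.eval y ((cb : R) * (ca : R)) = 0 := by
      intro y hy
      have := congrArg (Polynomial.eval₂ (MvPolynomial.eval y)
        ((MvPolynomial.eval y A) ^ ((1:ℝ)/(m:ℝ)))) main'
      simp only [eval₂_add, eval₂_mul, eval₂_C] at this
      rw [hfeval y hy, heval y hy] at this
      simpa using this
    have : ((cb : R) * (ca : R)) = 0 := hzero _ hvan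
    rcases mul_eq_zero.mp this with h | h
    · exact nonZeroDivisors.ne_zero cb.2 h
    · exact nonZeroDivisors.ne_zero ca.2 h
  have hc2 : Φ = 0 := by
    have := congrArg (fun q : R[X] => q.coeff 2) hg0
    simpa [hgdef, coeff_C_mul, coeff_X_pow, coeff_C, -_root_.map_pow, -_root_.map_mul] using this
  have hc1 : Ψ = 0 ∨ A = 0 := by
    have := congrArg (fun q : R[X] => q.coeff 1) hg0
    simpa [hgdef, coeff_C_mul, coeff_X_pow, coeff_C, -_root_.map_pow, -_root_.map_mul] using this
  have hc0 : Θ = 0 ∨ A = 0 := by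
    have := congrArg (fun q : R[X] => q.coeff 0) hg0
    simpa [hgdef, coeff_C_mul, coeff_X_pow, coeff_C, -_root_.map_pow, -_root_.map_mul] using this
  exact ⟨hc2, hc1.resolve_right hAnz, hc0.resolve_right hAnz⟩

end Aux

/-- if `Φ·A^{(2/m)−2} + Ψ·A^{(1/m)−1} + Θ = 0` on a nonempty open
set where the nonconstant irreducible polynomial `A` is positive, and `m > 2`,
then `Φ = Ψ = Θ = 0`. -/
theorem rational_irrational_independence
    (n m : ℕ) (hm : 2 < m)
    (A : MvPolynomial (Fin n) ℝ) (hAirr : Irreducible A) (hAnc : 0 < A.totalDegree)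
    (W : Set (Fin n → ℝ)) (hW : IsOpen W) (hWne : W.Nonempty)
    (hWA : ∀ y ∈ W, 0 < MvPolynomial.eval y A)
    (Φ Ψ Θ : MvPolynomial (Fin n) ℝ)
    (h : ∀ y ∈ W,
      MvPolynomial.eval y Φ * (MvPolynomial.eval y A) ^ ((2:ℝ)/(m:ℝ) - 2)
        + MvPolynomial.eval y Ψ * (MvPolynomial.eval y A) ^ ((1:ℝ)/(m:ℝ) - 1)
        + MvPolynomial.eval y Θ = 0) :
    Φ = 0 ∧ Ψ = 0 ∧ Θ = 0 := by
  have hm0 : (m : ℝ) ≠ 0 := by positivity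
  have hAnz : A ≠ 0 := hAirr.ne_zero
  apply aux_main hm A hAnz Φ Ψ Θ (aux_xm_sub_A_irred (by omega) A hAirr) W hWne
  · intro q hq
    exact aux_mvpoly_zero_of_eqOn hW hWne hq
  · intro y hy
    have pos := hWA y hy
    set Ay := MvPolynomial.eval y A with hAy
    set u : ℝ := Ay ^ ((1:ℝ)/(m:ℝ)) with hu
    have hu2 : u ^ 2 = Ay ^ ((2:ℝ)/(m:ℝ)) := by
      rw [hu, ← Real.rpow_natCast (Ay ^ ((1:ℝ)/(m:ℝ))) 2, ← Real.rpow_mul pos.le]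
      norm_num
      ring_nf
    have he1 : Ay ^ ((2:ℝ)/(m:ℝ)) = Ay ^ ((2:ℝ)/(m:ℝ) - 2) * Ay ^ 2 := by
      rw [← Real.rpow_natCast Ay 2, ← Real.rpow_add pos]
      norm_num
    have he2 : Ay ^ ((1:ℝ)/(m:ℝ)) * Ay = Ay ^ ((1:ℝ)/(m:ℝ) - 1) * Ay ^ 2 := by
      rw [← Real.rpow_natCast Ay 2, ← Real.rpow_add pos,
        show (1:ℝ)/(m:ℝ) - 1 + ((2:ℕ):ℝ) = 1/(m:ℝ) + 1 by push_cast; ring,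
        Real.rpow_add pos, Real.rpow_one]
    have hE : Polynomial.eval₂ (MvPolynomial.eval y) u
        (Polynomial.C Φ * Polynomial.X ^ 2 + Polynomial.C (Ψ * A) * Polynomial.X
          + Polynomial.C (Θ * A ^ 2) : Polynomial (MvPolynomial (Fin n) ℝ)) =
        MvPolynomial.eval y Φ * u ^ 2 + MvPolynomial.eval y Ψ * Ay * u
          + MvPolynomial.eval y Θ * Ay ^ 2 := by
      simp only [Polynomial.eval₂_add, Polynomial.eval₂_mul, Polynomial.eval₂_C,
        Polynomial.eval₂_X_pow, Polynomial.eval₂_X]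
      rw [_root_.map_mul, _root_.map_mul, _root_.map_pow, ← hAy]
    rw [hE, hu2, he1]
    calc MvPolynomial.eval y Φ * (Ay ^ ((2:ℝ)/(m:ℝ) - 2) * Ay ^ 2)
          + MvPolynomial.eval y Ψ * Ay * u + MvPolynomial.eval y Θ * Ay ^ 2
        = (MvPolynomial.eval y Φ * Ay ^ ((2:ℝ)/(m:ℝ) - 2)
            + MvPolynomial.eval y Ψ * Ay ^ ((1:ℝ)/(m:ℝ) - 1)
            + MvPolynomial.eval y Θ) * Ay ^ 2 := by
          rw [hu]
          linear_combination (MvPolynomial.eval y Ψ) * he2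
      _ = 0 := by rw [h y hy]; ring
  · intro y hy
    have pos := hWA y hy
    have hum : ((MvPolynomial.eval y A) ^ ((1:ℝ)/(m:ℝ))) ^ m = MvPolynomial.eval y A := by
      rw [← Real.rpow_natCast ((MvPolynomial.eval y A) ^ ((1:ℝ)/(m:ℝ))) m,
        ← Real.rpow_mul pos.le]
      rw [one_div, inv_mul_cancel₀ hm0, Real.rpow_one]
    rw [Polynomial.eval₂_sub, Polynomial.eval₂_X_pow, Polynomial.eval₂_C, hum, sub_self]
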